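/- Let a, b, c, d be four distinct letters. The partial word ab³⋄³(a⋄⁶)³b(⋄¹⁴c)⁵(⋄⁷d)⁴b³ of length 139 over the alphabet {a, b, c, d} is unbordered and has exactly 119 holes. -/
import Mathlib


/-- The domain of a partial word (a list over `Option A`, where `none` is the hole):
the set of positions carrying a letter. -/
def PartialWord.domain {A : Type*} (w : List (Option A)) : Finset ℕ :=
  (Finset.range w.length).filter fun i => (w.getD i none).isSome

/-- Two partial words are compatible if they have the same length and agree on the
intersection of their domains. -/
def PartialWord.Compatible {A : Type*} (w v : List (Option A)) : Prop :=
  w.length = v.length ∧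
    ∀ i ∈ PartialWord.domain w ∩ PartialWord.domain v, w.getD i none = v.getD i none

/-- A partial word is unbordered if no nonempty proper prefix is compatible with a
suffix of the same length. -/
def PartialWord.Unbordered {A : Type*} (w : List (Option A)) : Prop :=
  ∀ x y : List (Option A), x <+: w → y <:+ w → x ≠ [] → x.length < w.length →
    x.length = y.length → ¬ PartialWord.Compatible x y

/-- The number of holes of a partial word. -/
def PartialWord.holes {A : Type*} (w : List (Option A)) : ℕ :=
  w.countP fun x => x.isNone

/-- `u` repeated `t` times. -/
def listPow {α : Type*} (u : List α) (t : ℕ) : List α := (List.replicate t u).flatten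

/-- A complete sparse ruler of length `n`. -/
def IsCompleteRuler (n : ℕ) (R : Finset ℕ) : Prop :=
  (∀ x ∈ R, x ≤ n) ∧ 0 ∈ R ∧ n ∈ R ∧ ∀ d ≤ n, ∃ r ∈ R, ∃ s ∈ R, r = s + d

/-- Minimum number of marks of a complete sparse ruler of length `n`. -/
noncomputable def M1 (n : ℕ) : ℕ :=
  sInf {k | ∃ R : Finset ℕ, IsCompleteRuler n R ∧ R.card = k}

/-- Maximum number of holes an unbordered partial word of length `n` over an alphabet
of size `k` can have. -/
noncomputable def HB (k n : ℕ) : ℕ :=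
  sSup {h | ∃ w : List (Option (Fin k)),
    w.length = n ∧ PartialWord.Unbordered w ∧ PartialWord.holes w = h}

/-- The ruler (set of partial sums) given by a difference representation. -/
def rulerOfDiffs (D : List ℕ) : Finset ℕ :=
  ((List.range (D.length + 1)).map fun t => (D.take t).sum).toFinset

/-- The difference representation of the extended Wichmann ruler `w₁(r,s,i,j)`. -/
def wichmannDiffs (r s i j : ℕ) : List ℕ :=
  List.replicate r 1 ++ [r + 1] ++ List.replicate r (2 * r + 1) ++
    List.replicate s (4 * r + 3) ++ List.replicate (r + 1) (2 * r + 2) ++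
    List.replicate r 1 ++ List.replicate i (r + 1) ++ [j]

/-- A complete two-dimensional sparse ruler: an `(n,m)`-ruler. -/
def IsRuler2 (n m : ℕ) (R : Finset (ℕ × ℕ)) : Prop :=
  (∀ p ∈ R, p.1 < n ∧ p.2 < m) ∧
    ∀ x y : ℤ, |x| ≤ (n : ℤ) - 1 → |y| ≤ (m : ℤ) - 1 →
      ∃ p ∈ R, ∃ q ∈ R, (p.1 : ℤ) - (q.1 : ℤ) = x ∧ (p.2 : ℤ) - (q.2 : ℤ) = y

/-- Minimum number of marks of an `(n,m)`-ruler. -/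
noncomputable def M2 (n m : ℕ) : ℕ :=
  sInf {k | ∃ R : Finset (ℕ × ℕ), IsRuler2 n m R ∧ R.card = k}

/-- The domain of an `n` by `m` two-dimensional partial word. -/
def domain2 {A : Type*} (n m : ℕ) (w : ℕ × ℕ → Option A) : Finset (ℕ × ℕ) :=
  (Finset.range n ×ˢ Finset.range m).filter fun p => (w p).isSome

/-- An `n` by `m` two-dimensional partial word is unbordered if its domain is an
`(n,m)`-ruler and every nonzero measurable vector can be measured between two
positions carrying distinct letters. -/
def Unbordered2 {A : Type*} (n m : ℕ) (w : ℕ × ℕ → Option A) : Prop :=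
  IsRuler2 n m (domain2 n m w) ∧
    ∀ x y : ℤ, |x| ≤ (n : ℤ) - 1 → |y| ≤ (m : ℤ) - 1 → ¬(x = 0 ∧ y = 0) →
      ∃ p ∈ domain2 n m w, ∃ q ∈ domain2 n m w,
        (p.1 : ℤ) - (q.1 : ℤ) = x ∧ (p.2 : ℤ) - (q.2 : ℤ) = y ∧ w p ≠ w q

/-- Number of holes of an `n` by `m` two-dimensional partial word. -/
def holes2 {A : Type*} (n m : ℕ) (w : ℕ × ℕ → Option A) : ℕ :=
  n * m - (domain2 n m w).card

/-- Maximum number of holes an unbordered `n` by `m` two-dimensional partial word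
over an alphabet of size `k` can have. -/
noncomputable def HB2 (k n m : ℕ) : ℕ :=
  sSup {h | ∃ w : ℕ × ℕ → Option (Fin k), Unbordered2 n m w ∧ holes2 n m w = h}

set_option maxRecDepth 20000 in
/-- auxiliary: the word as a function of the four letters -/
def wordW {A : Type*} (a b c d : A) : List (Option A) :=
  [some a] ++ List.replicate 3 (some b) ++ List.replicate 3 none ++
    listPow ([some a] ++ List.replicate 6 none) 3 ++ [some b] ++
    listPow (List.replicate 14 none ++ [some c]) 5 ++
    listPow (List.replicate 7 none ++ [some d]) 4 ++ List.replicate 3 (some b)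

lemma wordW_map {A : Type*} (a b c d : A) :
    wordW a b c d = (wordW (0:Fin 4) 1 2 3).map (Option.map ![a,b,c,d]) := by
  simp [wordW, listPow, List.map_append, List.map_replicate, List.map_flatten]

lemma unbordered_of_map {A B : Type*} (f : B → A) (hf : Function.Injective f)
    (L : List (Option B))
    (h : ∀ ℓ < L.length, 0 < ℓ → ∃ i < ℓ,
      (L.getD i none).isSome ∧ (L.getD (L.length - ℓ + i) none).isSome ∧
      L.getD i none ≠ L.getD (L.length - ℓ + i) none) :
    PartialWord.Unbordered (L.map (Option.map f)) := by
  intro x y hx hy hne hlt hlen hcomp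
  set g := Option.map f with hg
  set w := L.map g with hw
  have hwlen : w.length = L.length := by simp [hw]
  set n := L.length with hn
  set ℓ := x.length with hℓ
  have hℓpos : 0 < ℓ := List.length_pos_iff.mpr hne
  have hℓlt : ℓ < n := by rwa [hwlen] at hlt
  obtain ⟨i, hi, h1, h2, h3⟩ := h ℓ hℓlt hℓpos
  set j := n - ℓ + i with hj
  have hin : i < n := hi.trans hℓlt
  have hjn : j < n := by omega
  have hxeq : x = w.take ℓ := List.prefix_iff_eq_take.mp hx
  have hyeq : y = w.drop (n - ℓ) := by
    have := List.suffix_iff_eq_drop.mp hy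
    rwa [hwlen, ← hlen] at this
  have hxg : x.getD i none = g (L.getD i none) := by
    rw [hxeq]
    rw [List.getD_eq_getElem?_getD, List.getElem?_take_of_lt hi, List.getElem?_map,
      List.getElem?_eq_getElem (by exact hin)]
    simp [List.getD_eq_getElem?_getD, List.getElem?_eq_getElem hin, hw]
  have hyg : y.getD i none = g (L.getD j none) := by
    rw [hyeq]
    rw [List.getD_eq_getElem?_getD, List.getElem?_drop, List.getElem?_map]
    rw [show (n - ℓ) + i = j from rfl, List.getElem?_eq_getElem (by exact hjn)]
    simp [List.getD_eq_getElem?_getD, List.getElem?_eq_getElem hjn, hw]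
  have hidom : i ∈ PartialWord.domain x ∩ PartialWord.domain y := by
    simp only [Finset.mem_inter, PartialWord.domain, Finset.mem_filter, Finset.mem_range]
    refine ⟨⟨by omega, ?_⟩, ⟨by omega, ?_⟩⟩
    · rw [hxg]; cases hL : L.getD i none with
      | none => rw [hL] at h1; simp at h1
      | some v => simp [hg]
    · rw [hyg]; cases hL : L.getD j none with
      | none => rw [hL] at h2; simp at h2
      | some v => simp [hg]
  have := hcomp.2 i hidom
  rw [hxg, hyg] at this
  exact h3 (Option.map_injective hf this)

set_option maxRecDepth 20000 in
lemma wordW_witness : ∀ ℓ < (wordW (0:Fin 4) 1 2 3).length, 0 < ℓ → ∃ i < ℓ,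
    ((wordW (0:Fin 4) 1 2 3).getD i none).isSome ∧
    ((wordW (0:Fin 4) 1 2 3).getD ((wordW (0:Fin 4) 1 2 3).length - ℓ + i) none).isSome ∧
    (wordW (0:Fin 4) 1 2 3).getD i none ≠
      (wordW (0:Fin 4) 1 2 3).getD ((wordW (0:Fin 4) 1 2 3).length - ℓ + i) none := by
  decide

set_option maxRecDepth 20000

/-- For four distinct letters `a, b, c, d`, the partial word
`ab³⋄³(a⋄⁶)³b(⋄¹⁴c)⁵(⋄⁷d)⁴b³` of length `139` over the alphabet `{a,b,c,d}` is
unbordered and has exactly `119` holes. -/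
theorem word139_unbordered {A : Type*} (a b c d : A) (hab : a ≠ b) (hac : a ≠ c)
    (had : a ≠ d) (hbc : b ≠ c) (hbd : b ≠ d) (hcd : c ≠ d) :
    let w : List (Option A) :=
      [some a] ++ List.replicate 3 (some b) ++ List.replicate 3 none ++
        listPow ([some a] ++ List.replicate 6 none) 3 ++ [some b] ++
        listPow (List.replicate 14 none ++ [some c]) 5 ++
        listPow (List.replicate 7 none ++ [some d]) 4 ++ List.replicate 3 (some b)
    w.length = 139 ∧ PartialWord.Unbordered w ∧ PartialWord.holes w = 119 := by
  intro w
  have hw : w = wordW a b c d := rfl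
  have hf : Function.Injective ![a, b, c, d] := by
    intro x y hxy
    fin_cases x <;> fin_cases y <;> simp_all
  refine ⟨?_, ?_, ?_⟩
  · rw [hw, wordW_map a b c d]
    simp only [List.length_map]
    decide
  · rw [hw, wordW_map a b c d]
    exact unbordered_of_map _ hf _ wordW_witness
  · rw [hw, wordW_map a b c d, PartialWord.holes, List.countP_map]
    rfl
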